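/- Let G be a chordal graph and H an induced subgraph of G. If HS_k(I(G^c)) has linear quotients for some k, then HS_k(I(H^c)) also has linear quotients. -/

import Mathlib

open Finset

/-- Edge relation of the graph `Hₙ` (one orientation). -/
def HE (n a b : ℕ) : Prop :=
  (1 ≤ a ∧ a ≤ n - 5 ∧ b = a + 1) ∨
  (a = n - 4 ∧ b = n - 2) ∨ (a = n - 2 ∧ b = n - 3) ∨
  (a = n - 1 ∧ 2 ≤ b ∧ b ≤ n ∧ b ≠ n - 1) ∨
  (a = n ∧ 1 ≤ b ∧ b ≤ n ∧ b ≠ n - 3 ∧ b ≠ n)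

/-- Edge relation of the graph `Hₙ` (symmetrized). -/
def Hedge (n a b : ℕ) : Prop := HE n a b ∨ HE n b a

def LHE (n r a b : ℕ) : Prop :=
  (n + 1 ≤ a ∧ a ≤ n + r ∧ 1 ≤ b ∧ b ≤ n ∧ b ≠ n - 3) ∨
  (n + 1 ≤ a ∧ a ≤ n + r ∧ n + 1 ≤ b ∧ b ≤ n + r ∧ a ≠ b)

/-- Edge relation of `LH_{n,r}`. -/
def LHedge (n r a b : ℕ) : Prop := Hedge n a b ∨ LHE n r a b ∨ LHE n r b a

/-- Edge relation of `CH_{n,r}`: a shifted copy of `Hₙ` on `{r+1,…,r+n}`,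
a clique on `{1,…,r}`, each clique vertex joined to `x_{r+n-1}` and `x_{r+n}`. -/
def CHedge (n r a b : ℕ) : Prop :=
  (r < a ∧ r < b ∧ Hedge n (a - r) (b - r)) ∨
  (1 ≤ a ∧ a ≤ r ∧ 1 ≤ b ∧ b ≤ r ∧ a ≠ b) ∨
  (1 ≤ a ∧ a ≤ r ∧ (b = r + n - 1 ∨ b = r + n)) ∨
  (1 ≤ b ∧ b ≤ r ∧ (a = r + n - 1 ∨ a = r + n))

/-- Edge relation of `ACH_{n,r}`: `CH_{n,r}` plus edges from `{1,…,r}` to `x_{r+n-2}`. -/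
def ACHedge (n r a b : ℕ) : Prop :=
  CHedge n r a b ∨ (1 ≤ a ∧ a ≤ r ∧ b = r + n - 2) ∨ (1 ≤ b ∧ b ≤ r ∧ a = r + n - 2)

/-- Minimal generators (as squarefree supports) of the `k`-th homological shift ideal
`HS_k(I(G^c))` of the edge ideal of the complement of a graph `G` with edge relation `E`
on vertex set `V`, whose natural order is a perfect elimination ordering
(Herzog–Moradi–Rahimbeigi–Zhu description). -/
def hsGens (E : ℕ → ℕ → Prop) (V : Finset ℕ) (k : ℕ) : Set (Finset ℕ) :=
  {h | h ⊆ V ∧ h.card = k + 2 ∧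
    ∃ t ∈ h, (∃ l ∈ h, t < l) ∧ ∀ l ∈ h, t < l → ¬ E t l}

/-- The successive-colon (linear quotients) condition for a given ordering of the
minimal generators of a squarefree monomial ideal generated in one degree. -/
def LQList (L : List (Finset ℕ)) : Prop :=
  ∀ i j : Fin L.length, i < j →
    ∃ p : Fin L.length, p < j ∧ ∃ v : ℕ,
      L.get p \ L.get j = {v} ∧ v ∈ L.get i \ L.get j

/-- A finite set of squarefree monomials (generators of an equigenerated monomial ideal)
has linear quotients: some linear order of the generators works. -/
def HasLQ (S : Set (Finset ℕ)) : Prop :=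
  ∃ L : List (Finset ℕ), L.Nodup ∧ (∀ h, h ∈ L ↔ h ∈ S) ∧ LQList L

/-- `g >_lex f` for squarefree monomials with variable order `x₁ > x₂ > ⋯`. -/
def lexGt (g f : Finset ℕ) : Prop :=
  List.Lex (· < ·) (g.sort (· ≤ ·)) (f.sort (· ≤ ·))

def fmax (h : Finset ℕ) : ℕ := h.sup id
noncomputable def fmin (h : Finset ℕ) : ℕ := sInf (↑h : Set ℕ)
def smax (h : Finset ℕ) : ℕ := (h.erase (fmax h)).sup id

/-- The natural order on vertices is a perfect elimination ordering. -/
def IsPEO (E : ℕ → ℕ → Prop) (V : Finset ℕ) : Prop :=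
  ∀ i ∈ V, ∀ j ∈ V, ∀ l ∈ V, i < j → i < l → j ≠ l → E i j → E i l → E j l

/-- A graph on `V` is chordal iff some relabeling of the vertices is a perfect
elimination ordering. -/
def ChordalOn (E : ℕ → ℕ → Prop) (V : Finset ℕ) : Prop :=
  ∃ π : ℕ → ℕ, Set.BijOn π ↑V ↑V ∧ IsPEO (fun a b => E (π a) (π b)) V

/-- Let `G` be a chordal graph (with perfect elimination ordering
given by the natural order on `V`) and `H` the induced subgraph on `W ⊆ V`. If
`HS_k(I(Gᶜ))` has linear quotients then so does `HS_k(I(Hᶜ))`. -/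
theorem LQ_induced (E : ℕ → ℕ → Prop) (V W : Finset ℕ) (k : ℕ)
    (hchordal : IsPEO E V) (hW : W ⊆ V)
    (h : HasLQ (hsGens E V k)) : HasLQ (hsGens E W k) := by
  classical
  obtain ⟨L, hnd, hmem, hlq⟩ := h
  set L' : List (Finset ℕ) := L.filter (fun h => decide (h ⊆ W)) with hL'
  have hsub : L'.Sublist L := List.filter_sublist
  have hmem' : ∀ h, h ∈ L' ↔ h ∈ hsGens E W k := by
    intro g
    simp only [hL', List.mem_filter, decide_eq_true_eq, hmem]
    constructor
    · rintro ⟨⟨hV, hc, ht⟩, hgW⟩; exact ⟨hgW, hc, ht⟩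
    · rintro ⟨hgW, hc, ht⟩; exact ⟨⟨hgW.trans hW, hc, ht⟩, hgW⟩
  obtain ⟨f, hf⟩ := List.sublist_iff_exists_fin_orderEmbedding_get_eq.mp hsub
  refine ⟨L', hnd.sublist hsub, fun g => hmem' g, ?_⟩
  intro i j hij
  obtain ⟨p, hpj, v, hpv, hvi⟩ := hlq (f i) (f j) (f.lt_iff_lt.mpr hij)
  -- L.get p ⊆ W
  have hiW : L'.get i ⊆ W := ((hmem' _).mp (List.get_mem L' i)).1
  have hjW : L'.get j ⊆ W := ((hmem' _).mp (List.get_mem L' j)).1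
  have hvW : v ∈ W := hiW (by rw [hf i]; exact (Finset.mem_sdiff.mp hvi).1)
  have hpW : L.get p ⊆ W := by
    intro x hx
    by_cases hxj : x ∈ L.get (f j)
    · exact hjW (by rwa [← hf j] at hxj)
    · have : x ∈ L.get p \ L.get (f j) := Finset.mem_sdiff.mpr ⟨hx, hxj⟩
      rw [hpv, Finset.mem_singleton] at this
      exact this ▸ hvW
  -- L.get p ∈ L'
  have hpL' : L.get p ∈ L' := by
    rw [hmem']
    obtain ⟨-, hc, ht⟩ := (hmem _).mp (List.get_mem L p)
    exact ⟨hpW, hc, ht⟩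
  obtain ⟨p', hp'⟩ := List.mem_iff_get.mp hpL'
  have hfp' : f p' = p := by
    apply List.nodup_iff_injective_get.mp hnd
    rw [← hf p', hp']
  refine ⟨p', ?_, v, ?_, ?_⟩
  · exact f.lt_iff_lt.mp (by rw [hfp']; exact hpj)
  · rw [hp', hf j]; exact hpv
  · rw [hf i, hf j]; exact hvi
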